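/- Let g > 1 and a ≥ 0 be real numbers, and for integers k ≥ 1 define p_k = (B(k+a, 1+(g+a)/(g−1)) / B(1+a, 1+(g+a)/(g−1))) · (g+a)/(g−1+g(1+a)), where B is the Beta function. Then the sequence (p_k)_{k≥1} is a probability distribution: p_k ≥ 0 for all k and ∑_{k=1}^{∞} p_k = 1. -/

import Mathlib

/-- The Beta function `B(x,y) = Γ(x)Γ(y)/Γ(x+y)`. -/
noncomputable def Beta (x y : ℝ) : ℝ :=
  Real.Gamma x * Real.Gamma y / Real.Gamma (x + y)

/-- The closed-form facet degree distribution of GeneSCs: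
`p_k = (B(k+a, 1+(g+a)/(g−1)) / B(1+a, 1+(g+a)/(g−1))) · (g+a)/(g−1+g(1+a))`. -/
noncomputable def facetDegreeDist (g a : ℝ) (k : ℕ) : ℝ :=
  (Beta ((k : ℝ) + a) (1 + (g + a) / (g - 1)) /
    Beta (1 + a) (1 + (g + a) / (g - 1))) * ((g + a) / (g - 1 + g * (1 + a)))

lemma Beta_pos {x y : ℝ} (hx : 0 < x) (hy : 0 < y) : 0 < Beta x y :=
  div_pos (mul_pos (Real.Gamma_pos_of_pos hx) (Real.Gamma_pos_of_pos hy))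
    (Real.Gamma_pos_of_pos (by linarith))

/-- Telescoping identity: `B(x, 1+d) = B(x,d) - B(x+1, d)`. -/
lemma Beta_succ_right {x d : ℝ} (hx : 0 < x) (hd : 0 < d) :
    Beta x (1 + d) = Beta x d - Beta (x + 1) d := by
  unfold Beta
  have h1 : Real.Gamma (x + 1) = x * Real.Gamma x := Real.Gamma_add_one hx.ne'
  have h2 : Real.Gamma (1 + d) = d * Real.Gamma d := by
    rw [add_comm]; exact Real.Gamma_add_one hd.ne'
  have h3 : Real.Gamma (x + (1 + d)) = (x + d) * Real.Gamma (x + d) := by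
    rw [show x + (1 + d) = (x + d) + 1 by ring,
      Real.Gamma_add_one (by positivity : (x + d : ℝ) ≠ 0)]
  have h4 : Real.Gamma (x + 1 + d) = (x + d) * Real.Gamma (x + d) := by
    rw [show x + 1 + d = x + (1 + d) by ring, h3]
  have p1 : Real.Gamma (x + d) ≠ 0 := (Real.Gamma_pos_of_pos (by linarith)).ne'
  have p2 : (x + d : ℝ) ≠ 0 := by positivity
  rw [h1, h2, h3, h4]
  field_simp
  ring

/-- Ratio identity: `B(x+1, d) = B(x, d) * (x / (x + d))`. -/
lemma Beta_succ_left {x d : ℝ} (hx : 0 < x) (hd : 0 < d) :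
    Beta (x + 1) d = Beta x d * (x / (x + d)) := by
  unfold Beta
  have h1 : Real.Gamma (x + 1) = x * Real.Gamma x := Real.Gamma_add_one hx.ne'
  have h4 : Real.Gamma (x + 1 + d) = (x + d) * Real.Gamma (x + d) := by
    rw [show x + 1 + d = (x + d) + 1 by ring,
      Real.Gamma_add_one (by positivity : (x + d : ℝ) ≠ 0)]
  have p1 : Real.Gamma (x + d) ≠ 0 := (Real.Gamma_pos_of_pos (by linarith)).ne'
  have p2 : (x + d : ℝ) ≠ 0 := by positivity
  rw [h1, h4]
  field_simp

/-- `B(x, 1+d) = B(x, d) * (d / (x + d))`. -/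
lemma Beta_one_add_right {x d : ℝ} (hx : 0 < x) (hd : 0 < d) :
    Beta x (1 + d) = Beta x d * (d / (x + d)) := by
  rw [Beta_succ_right hx hd, Beta_succ_left hx hd]
  have p2 : (x + d : ℝ) ≠ 0 := by positivity
  field_simp
  ring

/-- For `g > 1`, `a ≥ 0`, the sequence `(p_k)_{k ≥ 1}` is a probability
distribution: `p_k ≥ 0` for all `k ≥ 1` and `∑_{k=1}^∞ p_k = 1`. -/
theorem facet_degree_dist_is_probability (g a : ℝ) (hg : 1 < g) (ha : 0 ≤ a) :
    (∀ k : ℕ, 1 ≤ k → 0 ≤ facetDegreeDist g a k) ∧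
      ∑' k : ℕ, facetDegreeDist g a (k + 1) = 1 := by
  have hg1 : (0:ℝ) < g - 1 := by linarith
  set d : ℝ := (g + a) / (g - 1) with hd_def
  have hd1 : 1 < d := by
    rw [hd_def, lt_div_iff₀ hg1]; linarith
  have hd0 : 0 < d := by linarith
  have hB : 0 < Beta (1 + a) (1 + d) := Beta_pos (by linarith) (by linarith)
  have hden : (0:ℝ) < g - 1 + g * (1 + a) := by nlinarith
  have hc : 0 < (g + a) / (g - 1 + g * (1 + a)) := div_pos (by linarith) hden
  constructor
  · intro k hk
    have hk' : (0:ℝ) < (k : ℝ) + a := by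
      have : (1:ℝ) ≤ (k : ℝ) := by exact_mod_cast hk
      linarith
    unfold facetDegreeDist
    rw [← hd_def]
    exact le_of_lt (mul_pos (div_pos (Beta_pos hk' (by linarith)) hB) hc)
  · set f : ℕ → ℝ := fun n => Beta ((n : ℝ) + 1 + a) d with hf
    have hxpos : ∀ n : ℕ, (0:ℝ) < (n : ℝ) + 1 + a := fun n => by positivity
    have hfpos : ∀ n, 0 < f n := fun n => Beta_pos (hxpos n) hd0
    -- recurrence
    have hrec : ∀ n : ℕ, f (n + 1) = f n * (((n : ℝ) + 1 + a) / ((n : ℝ) + 1 + a + d)) := by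
      intro n
      have : ((n + 1 : ℕ) : ℝ) + 1 + a = ((n : ℝ) + 1 + a) + 1 := by push_cast; ring
      rw [hf]
      simp only [this]
      exact Beta_succ_left (hxpos n) hd0
    -- bound: f n ≤ f 0 * ((1+a)/(n+1+a))
    have hbound : ∀ n : ℕ, f n ≤ f 0 * ((1 + a) / ((n : ℝ) + 1 + a)) := by
      intro n
      induction n with
      | zero =>
        norm_num
        rw [div_self (by positivity : (1 + a : ℝ) ≠ 0), mul_one]
      | succ n ih =>
        rw [hrec n]
        have h2 : ((n : ℝ) + 1 + a) / ((n : ℝ) + 1 + a + d) ≤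
            ((n : ℝ) + 1 + a) / ((n : ℝ) + 2 + a) := by
          apply div_le_div_of_nonneg_left (by linarith [hxpos n]) (by linarith [hxpos n])
          linarith
        calc f n * (((n : ℝ) + 1 + a) / ((n : ℝ) + 1 + a + d))
            ≤ (f 0 * ((1 + a) / ((n : ℝ) + 1 + a))) * (((n : ℝ) + 1 + a) / ((n : ℝ) + 2 + a)) := by
              apply mul_le_mul ih h2 (div_nonneg (by linarith [hxpos n]) (by linarith [hxpos n]))
                (mul_nonneg (hfpos 0).le (div_nonneg (by linarith) (by linarith [hxpos n])))
          _ = f 0 * ((1 + a) / (((n + 1 : ℕ) : ℝ) + 1 + a)) := by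
              push_cast
              rw [mul_assoc, div_mul_div_comm]
              congr 1
              rw [div_eq_div_iff (by positivity) (by positivity)]
              ring
    -- f tends to 0
    have hlim : Filter.Tendsto f Filter.atTop (nhds 0) := by
      have hat : Filter.Tendsto (fun n : ℕ => ((n : ℝ) + 1 + a)) Filter.atTop Filter.atTop := by
        apply Filter.tendsto_atTop_add_const_right
        apply Filter.tendsto_atTop_add_const_right
        exact tendsto_natCast_atTop_atTop
      have h0 : Filter.Tendsto (fun n : ℕ => f 0 * ((1 + a) / ((n : ℝ) + 1 + a)))
          Filter.atTop (nhds (f 0 * 0)) :=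
        (Filter.Tendsto.div_atTop tendsto_const_nhds hat).const_mul (f 0)
      rw [mul_zero] at h0
      exact squeeze_zero (fun n => (hfpos n).le) hbound h0
    -- each term is a telescoping difference
    have hterm : ∀ k : ℕ, facetDegreeDist g a (k + 1) =
        (f k - f (k + 1)) * ((g + a) / (g - 1 + g * (1 + a)) / Beta (1 + a) (1 + d)) := by
      intro k
      unfold facetDegreeDist
      rw [← hd_def]
      have hcast : ((k + 1 : ℕ) : ℝ) + a = (k : ℝ) + 1 + a := by push_cast; ring
      have hstep : Beta (((k + 1 : ℕ) : ℝ) + a) (1 + d) = f k - f (k + 1) := by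
        rw [hcast, Beta_succ_right (hxpos k) hd0, hf]
        have : ((k + 1 : ℕ) : ℝ) + 1 + a = ((k : ℝ) + 1 + a) + 1 := by push_cast; ring
        simp only [this]
      rw [hstep]
      ring
    -- telescoping sum
    have hnonneg : ∀ k : ℕ, 0 ≤ f k - f (k + 1) := by
      intro k
      rw [hrec k]
      have h1 : ((k : ℝ) + 1 + a) / ((k : ℝ) + 1 + a + d) ≤ 1 := by
        rw [div_le_one (by linarith [hxpos k])]
        linarith
      nlinarith [hfpos k, hxpos k]
    have htermnn : ∀ k : ℕ, 0 ≤ facetDegreeDist g a (k + 1) := by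
      intro k
      rw [hterm k]
      exact mul_nonneg (hnonneg k) (le_of_lt (div_pos hc hB))
    have hsum : HasSum (fun k : ℕ => facetDegreeDist g a (k + 1))
        (f 0 * ((g + a) / (g - 1 + g * (1 + a)) / Beta (1 + a) (1 + d))) := by
      rw [hasSum_iff_tendsto_nat_of_nonneg htermnn]
      have hps : ∀ n : ℕ, ∑ i ∈ Finset.range n, facetDegreeDist g a (i + 1) =
          (f 0 - f n) * ((g + a) / (g - 1 + g * (1 + a)) / Beta (1 + a) (1 + d)) := by
        intro n
        calc ∑ i ∈ Finset.range n, facetDegreeDist g a (i + 1)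
            = ∑ i ∈ Finset.range n, (f i - f (i + 1)) *
                ((g + a) / (g - 1 + g * (1 + a)) / Beta (1 + a) (1 + d)) :=
              Finset.sum_congr rfl fun i _ => hterm i
          _ = (∑ i ∈ Finset.range n, (f i - f (i + 1))) *
                ((g + a) / (g - 1 + g * (1 + a)) / Beta (1 + a) (1 + d)) := by
              rw [← Finset.sum_mul]
          _ = _ := by rw [Finset.sum_range_sub' f n]
      simp only [hps]
      have : Filter.Tendsto (fun n : ℕ => f 0 - f n) Filter.atTop (nhds (f 0 - 0)) :=
        (tendsto_const_nhds).sub hlim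
      rw [sub_zero] at this
      exact this.mul_const _
    rw [hsum.tsum_eq]
    -- final closed-form evaluation
    have hf0 : f 0 = Beta (1 + a) d := by
      rw [hf]; norm_num
    have hx0 : (0:ℝ) < 1 + a := by linarith
    have hkey : Beta (1 + a) (1 + d) = Beta (1 + a) d * (d / (1 + a + d)) :=
      Beta_one_add_right hx0 hd0
    have hBd : 0 < Beta (1 + a) d := Beta_pos hx0 hd0
    have hratio : (g + a) / (g - 1 + g * (1 + a)) = d / (1 + a + d) := by
      rw [hd_def]
      have h1 : (g:ℝ) - 1 ≠ 0 := hg1.ne'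
      have h2 : (g:ℝ) - 1 + g * (1 + a) ≠ 0 := hden.ne'
      have h3 : (1:ℝ) + a + (g + a) / (g - 1) ≠ 0 := by
        have : (0:ℝ) < (g + a) / (g - 1) := div_pos (by linarith) hg1
        positivity
      rw [div_eq_div_iff h2 h3]
      field_simp
      ring
    rw [hf0, hkey, hratio]
    have h1ad : (0:ℝ) < 1 + a + d := by linarith
    have hq : (0:ℝ) < d / (1 + a + d) := div_pos hd0 h1ad
    rw [mul_comm (Beta (1 + a) d) (d / (1 + a + d)), div_mul_cancel_left₀ hq.ne',
      mul_inv_cancel₀ hBd.ne']
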